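/- (Normalization of the reset law.) For every j ∈ {1,2} and every t > 0, the total mass of the law of the reset telegraph process at time t equals one: e^{−ξt}/(1 + λt) + ∫_{ℝ} p̃(x,t|v_j) dx = 1, where the integrand vanishes outside the bounded interval (min(v₂t,0), v₁t). -/

import Mathlib

open MeasureTheory Real Filter Topology Set

noncomputable section

namespace TelegraphReset

open Classical in
/-- Real-valued indicator of a proposition. -/
def ind (P : Prop) : ℝ := if P then 1 else 0

/-- Generalized incomplete gamma function `Γ(0, z₀, z₁) = ∫_{z₀}^{z₁} u⁻¹ e^{-u} du`. -/
def iGamma (z₀ z₁ : ℝ) : ℝ := ∫ u in z₀..z₁, u⁻¹ * Real.exp (-u)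

/-- Upper incomplete gamma function `Γ(0, a) = ∫_a^∞ u⁻¹ e^{-u} du`. -/
def uGamma (a : ℝ) : ℝ := ∫ u in Set.Ioi a, u⁻¹ * Real.exp (-u)

/-- `τ(x,t) = (x - v₂ t)/(v₁ - v₂)`. -/
def tauF (v₁ v₂ x t : ℝ) : ℝ := (x - v₂ * t) / (v₁ - v₂)

/-- The two velocities, indexed by `1` and `2`. -/
def vel (v₁ v₂ : ℝ) : ℕ → ℝ := fun n => if n = 1 then v₁ else v₂

/-- `Γ_λ^ξ(x,t)`, defined piecewise according to the sign of `v₂`. -/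
def GamL (v₁ v₂ lam xi x t : ℝ) : ℝ :=
  if v₂ < 0 then iGamma ((max (x / v₁) (x / v₂) + 1 / lam) * xi) ((t + 1 / lam) * xi)
  else iGamma ((x / v₁ + 1 / lam) * xi) ((min (x / v₂) t + 1 / lam) * xi)

/-- `Θ_λ^ξ(x,t)`, defined piecewise according to the sign of `v₂`. -/
def Theta (v₁ v₂ lam xi x t : ℝ) : ℝ :=
  if v₂ < 0 then
    Real.exp (-(xi * max (x / v₁) (x / v₂))) / (1 + lam * max (x / v₁) (x / v₂))
      - Real.exp (-(xi * t)) / (1 + lam * t)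
  else
    Real.exp (-(xi * (x / v₁))) / (1 + lam * (x / v₁))
      - Real.exp (-(xi * min (x / v₂) t)) / (1 + lam * min (x / v₂) t)

/-- Closed-form sub-density `P_{j,j}(x,t)` (Eq. (21)). -/
def Pss (v₁ v₂ lam xi : ℝ) (j : ℕ) (x t : ℝ) : ℝ :=
  ind (v₂ * t < x ∧ x < v₁ * t) * Real.exp (-(xi * t)) * lam ^ 2 *
      tauF v₁ v₂ x t ^ (2 - j) * (t - tauF v₁ v₂ x t) ^ (j - 1) /
      ((v₁ - v₂) * (1 + lam * t) ^ 2)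
  + Real.sign (vel v₁ v₂ j) * ind (0 < x / vel v₁ v₂ j ∧ x / vel v₁ v₂ j < t) * xi *
      Real.exp (-(xi * (x / vel v₁ v₂ j))) / (vel v₁ v₂ j + lam * x)
  + ind (min (v₂ * t) 0 < x ∧ x < v₁ * t) *
      ((-1 : ℝ) ^ (3 - j) * (xi * (vel v₁ v₂ (3 - j) + lam * x) / (v₁ - v₂) ^ 2) *
          Theta v₁ v₂ lam xi x t
        + (-1 : ℝ) ^ j * (xi * Real.exp (xi / lam) / (v₁ - v₂) ^ 2) *
            (vel v₁ v₂ (3 - j) * (lam + xi) / lam + x * xi) * GamL v₁ v₂ lam xi x t)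

/-- Closed-form sub-density `P_{3-j,j}(x,t)` (Eq. (22)). -/
def Pos (v₁ v₂ lam xi : ℝ) (j : ℕ) (x t : ℝ) : ℝ :=
  ind (v₂ * t < x ∧ x < v₁ * t) * Real.exp (-(xi * t)) * lam *
      (1 + lam * tauF v₁ v₂ x t ^ (j - 1) * (t - tauF v₁ v₂ x t) ^ (2 - j)) /
      ((v₁ - v₂) * (1 + lam * t) ^ 2)
  + ind (min (v₂ * t) 0 < x ∧ x < v₁ * t) *
      ((-1 : ℝ) ^ j * (xi * (vel v₁ v₂ (3 - j) + lam * x) / (v₁ - v₂) ^ 2) *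
          Theta v₁ v₂ lam xi x t
        + (-1 : ℝ) ^ (3 - j) * (xi * Real.exp (xi / lam) / (v₁ - v₂) ^ 2) *
            (vel v₁ v₂ j * (lam + xi) / lam + x * xi
              + (-1 : ℝ) ^ j * xi * (v₁ - v₂) / lam) * GamL v₁ v₂ lam xi x t)

/-- Closed-form reset density `p̃(x,t|v_j)` (Eq. (37)). -/
def pTil (v₁ v₂ lam xi : ℝ) (j : ℕ) (x t : ℝ) : ℝ :=
  Real.sign (vel v₁ v₂ j) * ind (0 < x / vel v₁ v₂ j ∧ x / vel v₁ v₂ j < t) * xi *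
      Real.exp (-(xi * (x / vel v₁ v₂ j))) / (vel v₁ v₂ j + lam * x)
  + ind (v₂ * t < x ∧ x < v₁ * t) * lam * Real.exp (-(xi * t)) /
      ((v₁ - v₂) * (1 + lam * t))
  + ind (min (v₂ * t) 0 < x ∧ x < v₁ * t) *
      (xi * Real.exp (xi / lam) / (v₁ - v₂)) * GamL v₁ v₂ lam xi x t

/-- First moment `E_j[X̃(t)]` (Eq. (54)). -/
def Emom (v₁ v₂ lam xi : ℝ) (j : ℕ) (t : ℝ) : ℝ :=
  (1 - Real.exp (-(xi * t))) *
      ((v₁ + v₂) / (2 * xi) + (vel v₁ v₂ j - vel v₁ v₂ (3 - j)) / (2 * lam))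
  - xi * Real.exp (xi / lam) * (vel v₁ v₂ j - vel v₁ v₂ (3 - j)) / (2 * lam ^ 2) *
      iGamma (xi / lam) (xi / lam * (1 + lam * t))
  + t * Real.exp (-(xi * t)) * (vel v₁ v₂ j - vel v₁ v₂ (3 - j)) / (2 * (1 + lam * t))

/-- Second moment `E_j[X̃²(t)]` (Eq. (55)). -/
def Smom (v₁ v₂ lam xi : ℝ) (j : ℕ) (t : ℝ) : ℝ :=
  (1 - Real.exp (-(xi * t))) *
      (2 * (v₁ ^ 2 + v₁ * v₂ + v₂ ^ 2) / (3 * xi ^ 2)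
        + (2 * vel v₁ v₂ j ^ 2 - v₁ * v₂ - vel v₁ v₂ (3 - j) ^ 2) / (3 * lam) *
            (1 / xi - 1 / lam))
  - t * Real.exp (-(xi * t)) *
      (2 * (v₁ ^ 2 + v₁ * v₂ + v₂ ^ 2) / (3 * xi)
        + (2 * vel v₁ v₂ j ^ 2 - v₁ * v₂ - vel v₁ v₂ (3 - j) ^ 2) /
            (3 * lam * (1 + lam * t)))
  + xi * Real.exp (xi / lam) *
      (2 * vel v₁ v₂ j ^ 2 - v₁ * v₂ - vel v₁ v₂ (3 - j) ^ 2) / (3 * lam ^ 3) *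
      iGamma (xi / lam) (xi / lam * (1 + lam * t))

/-- First moment of the reset-free process. -/
def m1 (v₁ v₂ lam : ℝ) (j : ℕ) (t : ℝ) : ℝ :=
  (v₁ + v₂) * t / 2 + (vel v₁ v₂ j - vel v₁ v₂ (3 - j)) * t / (2 * (1 + lam * t))

/-- Second moment of the reset-free process (Eq. (63)). -/
def m2 (v₁ v₂ lam : ℝ) (j : ℕ) (t : ℝ) : ℝ :=
  t ^ 2 * (3 * vel v₁ v₂ j ^ 2 + lam * t * (v₁ ^ 2 + v₁ * v₂ + v₂ ^ 2)) /
    (3 * (1 + lam * t))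


lemma ig_intable {a b : ℝ} (ha : 0 < a) (hb : 0 < b) :
    IntervalIntegrable (fun u : ℝ => u⁻¹ * Real.exp (-u)) volume a b := by
  apply ContinuousOn.intervalIntegrable
  apply ContinuousOn.mul
  · apply ContinuousOn.inv₀ continuousOn_id
    intro x hx
    have : 0 < x := by rcases Set.mem_uIcc.mp hx with ⟨h1, _⟩ | ⟨h1, _⟩ <;> linarith
    simpa using this.ne'
  · exact (Real.continuous_exp.comp continuous_neg).continuousOn

lemma iGamma_sub {a b T : ℝ} (ha : 0 < a) (hb : 0 < b) (hT : 0 < T) :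
    iGamma a b = iGamma a T - iGamma b T := by
  unfold iGamma
  have h := intervalIntegral.integral_interval_sub_left (ig_intable ha hT) (ig_intable ha hb)
  linarith

lemma hasDerivAt_G {lam xi t : ℝ} (hlam : 0 < lam) (hxi : 0 < xi) (ht : 0 < t) {s : ℝ}
    (hs : -(1 / lam) < s) :
    HasDerivAt (fun u => iGamma ((u + 1 / lam) * xi) ((t + 1 / lam) * xi))
      (-(Real.exp (-(xi / lam)) * Real.exp (-(xi * s)) / (s + 1 / lam))) s := by
  have hlam' : (0 : ℝ) < 1 / lam := by positivity
  have hT : (0 : ℝ) < (t + 1 / lam) * xi := by positivity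
  have hc : (0 : ℝ) < xi / lam := by positivity
  have hspos : 0 < s + 1 / lam := by linarith
  have hapos : 0 < (s + 1 / lam) * xi := by positivity
  set T : ℝ := (t + 1 / lam) * xi with hTdef
  -- eventual equality
  have hev : (fun u => iGamma ((u + 1 / lam) * xi) T)
      =ᶠ[𝓝 s] fun u => iGamma (xi / lam) T
        - ∫ x in (xi / lam)..((u + 1 / lam) * xi), x⁻¹ * Real.exp (-x) := by
    filter_upwards [isOpen_Ioi.eventually_mem (show s ∈ Set.Ioi (-(1 / lam)) from hs)] with u hu
    have hu' : 0 < (u + 1 / lam) * xi := by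
      have h0 : -(1 / lam) < u := Set.mem_Ioi.mp hu
      have : 0 < u + 1 / lam := by linarith
      positivity
    have h2 := iGamma_sub hc hu' hT
    unfold iGamma at h2 ⊢
    linarith
  -- derivative of the primitive
  have hmeas : StronglyMeasurableAtFilter (fun u : ℝ => u⁻¹ * Real.exp (-u)) (𝓝 ((s + 1 / lam) * xi)) volume :=
    ((measurable_inv.mul (Real.measurable_exp.comp measurable_neg)).stronglyMeasurable).stronglyMeasurableAtFilter
  have hcont : ContinuousAt (fun u : ℝ => u⁻¹ * Real.exp (-u)) ((s + 1 / lam) * xi) :=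
    ((continuousAt_inv₀ hapos.ne').mul ((Real.continuous_exp.comp continuous_neg).continuousAt))
  have hP : HasDerivAt (fun a : ℝ => ∫ x in (xi / lam)..a, x⁻¹ * Real.exp (-x))
      (((s + 1 / lam) * xi)⁻¹ * Real.exp (-((s + 1 / lam) * xi))) ((s + 1 / lam) * xi) :=
    intervalIntegral.integral_hasDerivAt_right (ig_intable hc hapos) hmeas hcont
  have haff : HasDerivAt (fun u : ℝ => (u + 1 / lam) * xi) xi s := by
    simpa using ((hasDerivAt_id s).add_const (1 / lam)).mul_const xi
  have hcomp := hP.comp s haff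
  have hfull := (hasDerivAt_const s (iGamma (xi / lam) T)).sub hcomp
  have := hfull.congr_of_eventuallyEq hev
  refine this.congr_deriv (Eq.symm ?_)
  have hexp : -((s + 1 / lam) * xi) = -(xi / lam) + -(xi * s) := by ring
  have h1 : (0:ℝ) < 1 + lam * s := by
    nlinarith [mul_pos hlam hspos, mul_one_div_cancel hlam.ne']
  rw [hexp, Real.exp_add]
  field_simp
  have h2 : s * lam + 1 ≠ 0 := by nlinarith
  ring


lemma G_contOn {lam xi t : ℝ} (hlam : 0 < lam) (hxi : 0 < xi) (ht : 0 < t) :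
    ContinuousOn (fun s : ℝ => iGamma ((s + 1 / lam) * xi) ((t + 1 / lam) * xi)) (Set.Icc 0 t) := by
  intro s hs
  have hs0 : (0:ℝ) ≤ s := hs.1
  have : -(1 / lam) < s := by
    have : (0:ℝ) < 1 / lam := by positivity
    linarith
  exact (hasDerivAt_G hlam hxi ht this).continuousAt.continuousWithinAt

lemma key_integral {lam xi t : ℝ} (hlam : 0 < lam) (hxi : 0 < xi) (ht : 0 < t) :
    (∫ s in (0:ℝ)..t, xi * Real.exp (-(xi * s)) / (1 + lam * s))
      + xi * Real.exp (xi / lam)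
          * ∫ s in (0:ℝ)..t, iGamma ((s + 1 / lam) * xi) ((t + 1 / lam) * xi)
      = 1 - Real.exp (-(xi * t)) := by
  have hlam' : (0:ℝ) < 1 / lam := by positivity
  have huicc : Set.uIcc (0:ℝ) t = Set.Icc 0 t := Set.uIcc_of_le ht.le
  have hcont1 : ContinuousOn (fun s : ℝ => xi * Real.exp (-(xi * s)) / (1 + lam * s))
      (Set.Icc 0 t) := by
    apply ContinuousOn.div
    · exact (continuous_const.mul (Real.continuous_exp.comp (continuous_neg.comp
        (continuous_const.mul continuous_id)))).continuousOn
    · exact (continuous_const.add (continuous_const.mul continuous_id)).continuousOn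
    · intro x hx
      have := hx.1
      nlinarith [mul_nonneg hlam.le hx.1]
  have hint1 : IntervalIntegrable (fun s : ℝ => xi * Real.exp (-(xi * s)) / (1 + lam * s))
      volume 0 t := (hcont1.mono (by rw [huicc])).intervalIntegrable
  have hint2 : IntervalIntegrable
      (fun s : ℝ => iGamma ((s + 1 / lam) * xi) ((t + 1 / lam) * xi)) volume 0 t :=
    ((G_contOn hlam hxi ht).mono (by rw [huicc])).intervalIntegrable
  rw [← intervalIntegral.integral_const_mul, ← intervalIntegral.integral_add hint1
    (hint2.const_mul _)]
  have hFTC := intervalIntegral.integral_eq_sub_of_hasDerivAt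
    (f := fun s : ℝ => -Real.exp (-(xi * s))
      + xi * Real.exp (xi / lam) * (s * iGamma ((s + 1 / lam) * xi) ((t + 1 / lam) * xi)))
    (f' := fun s : ℝ => xi * Real.exp (-(xi * s)) / (1 + lam * s)
      + xi * Real.exp (xi / lam) * iGamma ((s + 1 / lam) * xi) ((t + 1 / lam) * xi))
    (a := 0) (b := t) ?_ (hint1.add (hint2.const_mul _))
  · rw [hFTC]
    have h0 : ∀ a : ℝ, iGamma a a = 0 := fun a => intervalIntegral.integral_same
    simp [h0]
    ring
  · intro s hs
    rw [huicc] at hs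
    have hs0 : (0:ℝ) ≤ s := hs.1
    have hsl : -(1 / lam) < s := by linarith
    have hspos : 0 < s + 1 / lam := by linarith
    have h1 : (0:ℝ) < 1 + lam * s := by nlinarith [mul_nonneg hlam.le hs0]
    have hG := hasDerivAt_G (t := t) hlam hxi ht hsl
    have hexp : HasDerivAt (fun u : ℝ => -Real.exp (-(xi * u))) (xi * Real.exp (-(xi * s))) s := by
      have hinner : HasDerivAt (fun u : ℝ => -(xi * u)) (-xi) s := by
        exact ((hasDerivAt_id s).const_mul xi).neg.congr_deriv (by ring)
      exact ((Real.hasDerivAt_exp (-(xi * s))).comp s hinner).neg.congr_deriv (g' := xi * Real.exp (-(xi * s))) (by ring)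
    have hprod := ((hasDerivAt_id s).mul hG)
    have := hexp.add ((hprod.const_mul (xi * Real.exp (xi / lam))))
    refine this.congr_deriv (Eq.symm ?_)
    simp only [id_eq, one_mul]
    rw [show Real.exp (-(xi / lam)) = (Real.exp (xi / lam))⁻¹ from Real.exp_neg _]
    field_simp
    ring


lemma sign_term {v a xi lam : ℝ} (hv : v ≠ 0) (h1 : 1 + lam * a ≠ 0) (E : ℝ) :
    Real.sign v * 1 * xi * E / (v * (1 + lam * a)) = |v|⁻¹ * (xi * E / (1 + lam * a)) := by
  rcases lt_or_gt_of_ne hv with hneg | hpos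
  · rw [Real.sign_of_neg hneg, abs_of_neg hneg]
    field_simp
  · rw [Real.sign_of_pos hpos, abs_of_pos hpos]
    field_simp

lemma integral_indicator_comp_div {v : ℝ} (hv : v ≠ 0) {s : Set ℝ}
    (hs : MeasurableSet s) (f : ℝ → ℝ) :
    ∫ x : ℝ, (s.indicator f) (x / v) = |v| * ∫ x in s, f x := by
  rw [MeasureTheory.Measure.integral_comp_div (s.indicator f) v,
    MeasureTheory.integral_indicator hs, smul_eq_mul]

lemma integral_pTil {v₁ v₂ lam xi : ℝ} (hlam : 0 < lam) (hxi : 0 < xi)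
    (hv : v₂ < v₁) (hv1 : v₁ ≠ 0) (hv2 : v₂ ≠ 0)
    (hcase : (v₂ < 0 ∧ 0 < v₁) ∨ (0 < v₂ ∧ v₂ < v₁)) (v : ℝ) (hvv : v = v₁ ∨ v = v₂)
    {t : ℝ} (ht : 0 < t) :
    ∫ x : ℝ, (Real.sign v * ind (0 < x / v ∧ x / v < t) * xi *
        Real.exp (-(xi * (x / v))) / (v + lam * x)
      + ind (v₂ * t < x ∧ x < v₁ * t) * lam * Real.exp (-(xi * t)) /
          ((v₁ - v₂) * (1 + lam * t))
      + ind (min (v₂ * t) 0 < x ∧ x < v₁ * t) *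
          (xi * Real.exp (xi / lam) / (v₁ - v₂)) * GamL v₁ v₂ lam xi x t)
      = 1 - Real.exp (-(xi * t)) / (1 + lam * t) := by
  have hvne : v ≠ 0 := by rcases hvv with rfl | rfl <;> assumption
  have hv1pos : 0 < v₁ := by rcases hcase with ⟨h1, h2⟩ | ⟨h1, h2⟩ <;> linarith
  have hvd : v₁ - v₂ ≠ 0 := by linarith
  have hlt : (0:ℝ) < 1 + lam * t := by nlinarith
  set C : ℝ := xi * Real.exp (xi / lam) / (v₁ - v₂) with hC
  set c2 : ℝ := lam * Real.exp (-(xi * t)) / ((v₁ - v₂) * (1 + lam * t)) with hc2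
  set G : ℝ → ℝ := fun s => iGamma ((s + 1 / lam) * xi) ((t + 1 / lam) * xi) with hG
  set f1 : ℝ → ℝ := fun s => |v|⁻¹ * (xi * Real.exp (-(xi * s)) / (1 + lam * s)) with hf1
  set fGC : ℝ → ℝ := fun s => C * G s with hfGC
  -- continuity and integrability of the building blocks
  have hf1cont : ContinuousOn f1 (Set.Icc 0 t) := by
    apply ContinuousOn.mul continuousOn_const
    apply ContinuousOn.div
    · exact (continuous_const.mul (Real.continuous_exp.comp
        (continuous_neg.comp (continuous_const.mul continuous_id)))).continuousOn
    · exact (continuous_const.add (continuous_const.mul continuous_id)).continuousOn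
    · intro x hx; nlinarith [mul_nonneg hlam.le hx.1]
  have hf1Ioo : IntegrableOn f1 (Set.Ioo 0 t) :=
    (hf1cont.integrableOn_Icc).mono_set Set.Ioo_subset_Icc_self
  have hGCcont : ContinuousOn fGC (Set.Icc 0 t) :=
    continuousOn_const.mul (G_contOn hlam hxi ht)
  have hGCIcc : IntegrableOn fGC (Set.Icc 0 t) := hGCcont.integrableOn_Icc
  have hGCIoo : IntegrableOn fGC (Set.Ioo 0 t) := hGCIcc.mono_set Set.Ioo_subset_Icc_self
  have hGCIco : IntegrableOn fGC (Set.Ico 0 t) := hGCIcc.mono_set Set.Ico_subset_Icc_self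
  -- Term 1
  have hT1eq : ∀ x : ℝ, Real.sign v * ind (0 < x / v ∧ x / v < t) * xi *
      Real.exp (-(xi * (x / v))) / (v + lam * x)
      = ((Set.Ioo (0:ℝ) t).indicator f1) (x / v) := by
    intro x
    by_cases h : 0 < x / v ∧ x / v < t
    · rw [Set.indicator_of_mem (Set.mem_Ioo.mpr h), ind, if_pos h, hf1]
      have h1 : 0 < 1 + lam * (x / v) := by nlinarith [mul_pos hlam h.1]
      have hden : v + lam * x = v * (1 + lam * (x / v)) := by field_simp
      rw [hden]
      exact sign_term hvne h1.ne' _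
    · rw [ind, if_neg h, Set.indicator_of_notMem (by simpa [Set.mem_Ioo] using h)]
      simp
  have hT1int : Integrable (fun x : ℝ => ((Set.Ioo (0:ℝ) t).indicator f1) (x / v)) :=
    (hf1Ioo.integrable_indicator measurableSet_Ioo).comp_div hvne
  have hT1val : ∫ x : ℝ, ((Set.Ioo (0:ℝ) t).indicator f1) (x / v)
      = ∫ s in (0:ℝ)..t, xi * Real.exp (-(xi * s)) / (1 + lam * s) := by
    rw [integral_indicator_comp_div hvne measurableSet_Ioo, hf1]
    rw [MeasureTheory.integral_const_mul]
    rw [intervalIntegral.integral_of_le ht.le, integral_Ioc_eq_integral_Ioo]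
    rw [← mul_assoc, mul_inv_cancel₀ (abs_ne_zero.mpr hvne), one_mul]
  -- Term 2
  have hT2eq : ∀ x : ℝ, ind (v₂ * t < x ∧ x < v₁ * t) * lam * Real.exp (-(xi * t)) /
      ((v₁ - v₂) * (1 + lam * t))
      = ((Set.Ioo (v₂ * t) (v₁ * t)).indicator (fun _ => c2)) x := by
    intro x
    by_cases h : v₂ * t < x ∧ x < v₁ * t
    · rw [Set.indicator_of_mem (Set.mem_Ioo.mpr h), ind, if_pos h, hc2]
      ring
    · rw [ind, if_neg h, Set.indicator_of_notMem (by simpa [Set.mem_Ioo] using h)]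
      simp
  have hT2int : Integrable ((Set.Ioo (v₂ * t) (v₁ * t)).indicator (fun _ => c2)) := by
    apply MeasureTheory.IntegrableOn.integrable_indicator _ measurableSet_Ioo
    exact integrableOn_const measure_Ioo_lt_top.ne
  have hT2val : ∫ x : ℝ, ((Set.Ioo (v₂ * t) (v₁ * t)).indicator (fun _ => c2)) x
      = (v₁ * t - v₂ * t) * c2 := by
    rw [MeasureTheory.integral_indicator measurableSet_Ioo, MeasureTheory.setIntegral_const,
      Real.volume_real_Ioo_of_le (by nlinarith), smul_eq_mul]
  -- Term 3
  have hone : (0:ℝ) < 1 / lam := by positivity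
  have hT : (0:ℝ) < (t + 1 / lam) * xi := by positivity
  obtain ⟨A, hAint, hAval, h3eq⟩ :
      ∃ A : ℝ → ℝ, Integrable A ∧ ((∫ x : ℝ, A x) = -v₂ * ∫ s in Set.Ioo (0:ℝ) t, fGC s) ∧
        ∀ x : ℝ, ind (min (v₂ * t) 0 < x ∧ x < v₁ * t) * C * GamL v₁ v₂ lam xi x t
          = A x + ((Set.Ioo (0:ℝ) t).indicator fGC) (x / v₁) := by
    rcases hcase with ⟨hv2neg, _⟩ | ⟨hv2pos, _⟩
    · refine ⟨fun x => ((Set.Ico (0:ℝ) t).indicator fGC) (x / v₂),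
        (hGCIco.integrable_indicator measurableSet_Ico).comp_div hv2, ?_, ?_⟩
      · rw [integral_indicator_comp_div hv2 measurableSet_Ico, abs_of_neg hv2neg,
          integral_Ico_eq_integral_Ioo]
      · intro x
        have hmin : min (v₂ * t) 0 = v₂ * t := min_eq_left (by nlinarith)
        simp only [GamL]
        rw [if_pos hv2neg, hmin]
        by_cases hx : x ≤ 0
        · have hxv1 : x / v₁ ≤ 0 := div_nonpos_iff.mpr (Or.inr ⟨hx, hv1pos.le⟩)
          have hB : x / v₁ ∉ Set.Ioo (0:ℝ) t := by
            rw [Set.mem_Ioo]; push_neg; intro hcon; linarith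
          by_cases hx2 : v₂ * t < x
          · have ha1 : 0 ≤ x / v₂ := div_nonneg_of_nonpos hx hv2neg.le
            have ha2 : x / v₂ < t := by
              rw [div_lt_iff_of_neg hv2neg, mul_comm]; exact hx2
            have hmax : max (x / v₁) (x / v₂) = x / v₂ := max_eq_right (le_trans hxv1 ha1)
            rw [hmax, ind, if_pos ⟨hx2, lt_of_le_of_lt hx (by positivity)⟩,
              Set.indicator_of_mem (Set.mem_Ico.mpr ⟨ha1, ha2⟩),
              Set.indicator_of_notMem hB]
            simp only [hfGC, hG]
            ring
          · have ha : x / v₂ ∉ Set.Ico (0:ℝ) t := by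
              rw [Set.mem_Ico]; push_neg; intro _
              rw [le_div_iff_of_neg hv2neg, mul_comm]; exact not_lt.mp hx2
            rw [ind, if_neg (fun hcon => hx2 hcon.1), Set.indicator_of_notMem ha,
              Set.indicator_of_notMem hB]
            simp
        · push_neg at hx
          have haneg : x / v₂ < 0 := div_neg_of_pos_of_neg hx hv2neg
          have ha : x / v₂ ∉ Set.Ico (0:ℝ) t := by
            rw [Set.mem_Ico]; push_neg; intro hcon; linarith
          by_cases hx1 : x < v₁ * t
          · have hb1 : 0 < x / v₁ := div_pos hx hv1pos
            have hb2 : x / v₁ < t := by rw [div_lt_iff₀ hv1pos, mul_comm]; exact hx1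
            have hmax : max (x / v₁) (x / v₂) = x / v₁ := max_eq_left (haneg.le.trans hb1.le)
            rw [hmax, ind, if_pos ⟨by nlinarith, hx1⟩, Set.indicator_of_notMem ha,
              Set.indicator_of_mem (Set.mem_Ioo.mpr ⟨hb1, hb2⟩)]
            simp only [hfGC, hG]
            ring
          · have hb : x / v₁ ∉ Set.Ioo (0:ℝ) t := by
              rw [Set.mem_Ioo]; push_neg; intro _
              rw [le_div_iff₀ hv1pos, mul_comm]; exact not_lt.mp hx1
            rw [ind, if_neg (fun hcon => hx1 hcon.2), Set.indicator_of_notMem ha,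
              Set.indicator_of_notMem hb]
            simp
    · refine ⟨fun x => -(((Set.Ioo (0:ℝ) t).indicator fGC) (x / v₂)),
        ((hGCIoo.integrable_indicator measurableSet_Ioo).comp_div hv2).neg, ?_, ?_⟩
      · rw [MeasureTheory.integral_neg, integral_indicator_comp_div hv2 measurableSet_Ioo,
          abs_of_pos hv2pos]
        ring
      · intro x
        have hmin : min (v₂ * t) 0 = 0 := min_eq_right (by positivity)
        simp only [GamL]
        rw [if_neg (not_lt.mpr hv2pos.le), hmin]
        by_cases hx0 : 0 < x
        · by_cases hx1 : x < v₁ * t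
          · have hb1 : 0 < x / v₁ := div_pos hx0 hv1pos
            have hb2 : x / v₁ < t := by rw [div_lt_iff₀ hv1pos, mul_comm]; exact hx1
            have hax : 0 < (x / v₁ + 1 / lam) * xi := by positivity
            rw [ind, if_pos ⟨hx0, hx1⟩,
              Set.indicator_of_mem (Set.mem_Ioo.mpr ⟨hb1, hb2⟩)]
            by_cases hx2 : x < v₂ * t
            · have ha1 : 0 < x / v₂ := div_pos hx0 hv2pos
              have ha2 : x / v₂ < t := by rw [div_lt_iff₀ hv2pos, mul_comm]; exact hx2
              have hbx : 0 < (x / v₂ + 1 / lam) * xi := by positivity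
              rw [min_eq_left ha2.le,
                Set.indicator_of_mem (Set.mem_Ioo.mpr ⟨ha1, ha2⟩),
                iGamma_sub hax hbx hT]
              simp only [hfGC, hG]
              ring
            · have hta : t ≤ x / v₂ := by
                rw [le_div_iff₀ hv2pos, mul_comm]; exact not_lt.mp hx2
              have ha : x / v₂ ∉ Set.Ioo (0:ℝ) t := by
                rw [Set.mem_Ioo]; push_neg; intro _; exact hta
              rw [min_eq_right hta, Set.indicator_of_notMem ha]
              simp only [hfGC, hG]
              ring
          · have hb : x / v₁ ∉ Set.Ioo (0:ℝ) t := by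
              rw [Set.mem_Ioo]; push_neg; intro _
              rw [le_div_iff₀ hv1pos, mul_comm]; exact not_lt.mp hx1
            have ha : x / v₂ ∉ Set.Ioo (0:ℝ) t := by
              rw [Set.mem_Ioo]; push_neg; intro _
              rw [le_div_iff₀ hv2pos]; nlinarith [not_lt.mp hx1]
            rw [ind, if_neg (fun hcon => hx1 hcon.2), Set.indicator_of_notMem ha,
              Set.indicator_of_notMem hb]
            simp
        · have ha : x / v₂ ∉ Set.Ioo (0:ℝ) t := by
            rw [Set.mem_Ioo]; push_neg; intro hcon
            rcases div_pos_iff.mp hcon with ⟨h1, _⟩ | ⟨_, h2⟩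
            · exact absurd h1 hx0
            · linarith
          have hb : x / v₁ ∉ Set.Ioo (0:ℝ) t := by
            rw [Set.mem_Ioo]; push_neg; intro hcon
            rcases div_pos_iff.mp hcon with ⟨h1, _⟩ | ⟨_, h2⟩
            · exact absurd h1 hx0
            · linarith
          rw [ind, if_neg (fun hcon => hx0 hcon.1), Set.indicator_of_notMem ha,
            Set.indicator_of_notMem hb]
          simp
  have hBint : Integrable (fun x : ℝ => ((Set.Ioo (0:ℝ) t).indicator fGC) (x / v₁)) :=
    (hGCIoo.integrable_indicator measurableSet_Ioo).comp_div hv1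
  have hBval : ∫ x : ℝ, ((Set.Ioo (0:ℝ) t).indicator fGC) (x / v₁)
      = v₁ * ∫ s in Set.Ioo (0:ℝ) t, fGC s := by
    rw [integral_indicator_comp_div hv1 measurableSet_Ioo, abs_of_pos hv1pos]
  -- assemble
  have hintegrand : (fun x : ℝ => Real.sign v * ind (0 < x / v ∧ x / v < t) * xi *
        Real.exp (-(xi * (x / v))) / (v + lam * x)
      + ind (v₂ * t < x ∧ x < v₁ * t) * lam * Real.exp (-(xi * t)) /
          ((v₁ - v₂) * (1 + lam * t))
      + ind (min (v₂ * t) 0 < x ∧ x < v₁ * t) * C * GamL v₁ v₂ lam xi x t)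
      = fun x : ℝ => ((Set.Ioo (0:ℝ) t).indicator f1) (x / v)
        + (((Set.Ioo (v₂ * t) (v₁ * t)).indicator (fun _ => c2)) x
          + (A x + ((Set.Ioo (0:ℝ) t).indicator fGC) (x / v₁))) := by
    funext x
    rw [hT1eq x, hT2eq x, h3eq x]
    ring
  have hABint : Integrable (fun x : ℝ => A x + ((Set.Ioo (0:ℝ) t).indicator fGC) (x / v₁)) :=
    hAint.add hBint
  have h23int : Integrable (fun x : ℝ => ((Set.Ioo (v₂ * t) (v₁ * t)).indicator (fun _ => c2)) x
      + (A x + ((Set.Ioo (0:ℝ) t).indicator fGC) (x / v₁))) := hT2int.add hABint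
  rw [hintegrand, MeasureTheory.integral_add hT1int h23int,
    MeasureTheory.integral_add hT2int hABint,
    MeasureTheory.integral_add hAint hBint, hT1val, hT2val, hAval, hBval]
  have hIG : ∫ s in Set.Ioo (0:ℝ) t, fGC s
      = C * ∫ s in (0:ℝ)..t, iGamma ((s + 1 / lam) * xi) ((t + 1 / lam) * xi) := by
    simp only [hfGC, hG]
    rw [MeasureTheory.integral_const_mul, intervalIntegral.integral_of_le ht.le,
      integral_Ioc_eq_integral_Ioo]
  rw [hIG]
  have hkey := key_integral hlam hxi ht
  have hI1 : (∫ s in (0:ℝ)..t, xi * Real.exp (-(xi * s)) / (1 + lam * s))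
      = 1 - Real.exp (-(xi * t)) - xi * Real.exp (xi / lam)
          * ∫ s in (0:ℝ)..t, iGamma ((s + 1 / lam) * xi) ((t + 1 / lam) * xi) := by
    linarith [hkey]
  rw [hI1, hC, hc2]
  field_simp
  ring


/-- Normalization: the atom mass plus the total mass of the absolutely
continuous part of the reset law equals one. -/
theorem normalization (v₁ v₂ lam xi : ℝ) (hlam : 0 < lam) (hxi : 0 < xi)
    (hv : v₂ < v₁) (hv1 : v₁ ≠ 0) (hv2 : v₂ ≠ 0)
    (hcase : (v₂ < 0 ∧ 0 < v₁) ∨ (0 < v₂ ∧ v₂ < v₁)) :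
    ∀ j : ℕ, (j = 1 ∨ j = 2) → ∀ t : ℝ, 0 < t →
      Real.exp (-(xi * t)) / (1 + lam * t)
        + ∫ x : ℝ, pTil v₁ v₂ lam xi j x t = 1 := by
  intro j hj t ht
  rcases hj with rfl | rfl
  · have hvel : vel v₁ v₂ 1 = v₁ := by simp [vel]
    have h := integral_pTil hlam hxi hv hv1 hv2 hcase v₁ (Or.inl rfl) ht
    simp only [pTil, hvel]
    rw [h]
    ring
  · have hvel : vel v₁ v₂ 2 = v₂ := by norm_num [vel]
    have h := integral_pTil hlam hxi hv hv1 hv2 hcase v₂ (Or.inr rfl) ht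
    simp only [pTil, hvel]
    rw [h]
    ring

end TelegraphReset
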